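/- Let R be a ring, M and N be R-modules, A a submodule of M and B a submodule of N, and let L be an R-submodule of M × N satisfying comap inl L = A and map snd L = B. Then: (1) for every b ∈ B there exists m ∈ M with (m, b) ∈ L; (2) if (m, b) ∈ L and (m', b) ∈ L then m - m' ∈ A, so the class of m in M ⧸ A depends only on b; and (3) the resulting map f_L : B → M ⧸ A, sending b to the class of any m with (m, b) ∈ L, is R-linear. -/

import Mathlib

/-- If `L ≤ M × N` satisfies `comap inl L = A` and `map snd L = B`, then:
(1) every `b ∈ B` lifts to some `(m, b) ∈ L`;
(2) if `(m, b) ∈ L` and `(m', b) ∈ L` then `m - m' ∈ A`;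
(3) the induced map `f_L : B → M ⧸ A`, sending `b` to the class of any `m` with
`(m, b) ∈ L`, is `R`-linear. -/
theorem stmt1 (R M N : Type*) [Ring R] [AddCommGroup M] [AddCommGroup N]
    [Module R M] [Module R N] (A : Submodule R M) (B : Submodule R N)
    (L : Submodule R (M × N))
    (hA : Submodule.comap (LinearMap.inl R M N) L = A)
    (hB : Submodule.map (LinearMap.snd R M N) L = B) :
    (∀ b ∈ B, ∃ m : M, (m, b) ∈ L) ∧
    (∀ (m m' : M) (b : N), (m, b) ∈ L → (m', b) ∈ L → m - m' ∈ A) ∧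
    (∃ f : B →ₗ[R] M ⧸ A, ∀ (b : B) (m : M), (m, (b : N)) ∈ L → f b = A.mkQ m) := by
  have h1 : ∀ b ∈ B, ∃ m : M, (m, b) ∈ L := by
    intro b hb
    rw [← hB] at hb
    obtain ⟨⟨m, b'⟩, hm, rfl⟩ := hb
    exact ⟨m, hm⟩
  have h2 : ∀ (m m' : M) (b : N), (m, b) ∈ L → (m', b) ∈ L → m - m' ∈ A := by
    intro m m' b hm hm'
    rw [← hA]
    have := L.sub_mem hm hm'
    simpa using this
  refine ⟨h1, h2, ?_⟩
  choose g hg using h1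
  have key : ∀ (b : B) (m : M), (m, (b : N)) ∈ L → A.mkQ (g b b.2) = A.mkQ m := by
    intro b m hm
    rw [Submodule.mkQ_apply, Submodule.mkQ_apply, Submodule.Quotient.eq]
    exact h2 _ _ _ (hg b b.2) hm
  refine ⟨{ toFun := fun b => A.mkQ (g b b.2)
            map_add' := ?_
            map_smul' := ?_ }, fun b m hm => key b m hm⟩
  · intro x y
    rw [key (x + y) (g x x.2 + g y y.2) ?_, map_add]
    have := L.add_mem (hg x x.2) (hg y y.2)
    simpa using this
  · intro r x
    rw [key (r • x) (r • g x x.2) ?_, map_smul]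
    · rfl
    have := L.smul_mem r (hg x x.2)
    simpa using this
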